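/- Let p, q ∈ ℝ with p² > q, let I be a nonempty open interval such that (s²−p)² − q > 0 for all s ∈ I, and let α₁, α₂ : I → ℝ be twice differentiable, linearly independent (over ℝ, as functions on I) solutions of the ODE s·((s²−p)²−q)·α''(s) + (s⁴−p²+q)·α'(s) − s³·α(s) = 0 on I, satisfying s² + α₁(s)² + α₂(s)² = 1 for all s ∈ I. Then (p−1)² ≤ q < p² (in particular q ≥ 0 and p > √q), I ⊆ J_{p,q} := (−√(p−√q), √(p−√q)), and there exist θ ∈ ℝ and ε ∈ {−1, +1} such that for all s ∈ I, writing h := h_{p,q}(s) := √(p − s² + √((p − s²)² − q)): √2·α₁(s) = (h + (1−p)/h)·cos θ − ε·(√(q−(1−p)²)/h)·sin θ and √2·α₂(s) = (h + (1−p)/h)·sin θ + ε·(√(q−(1−p)²)/h)·cos θ. -/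

import Mathlib

open Real Set Filter Topology

set_option maxHeartbeats 1000000


/-- Two differentiable plane curves with the same (positive) norm and same Wronskian
differ by a constant rotation. -/

lemma wr_alg (h d r e c s u : ℝ) (hh : h ≠ 0) (hd : d ≠ 0) (hr : r ≠ 0) (hr2 : r^2 = 2) :
    e * (c * s) = ((h + u/h)/r * (e * (c * s / (d * h)) / r)
      - (e * (c/h)/r) * ((-(s*h)/d) * (1 - u/h^2)/r)) * d := by
  field_simp
  ring_nf
  linear_combination (e * c * s * h ^ 2) * hr2

lemma rot_aux {I : Set ℝ} (hIo : IsOpen I) (hconv : Convex ℝ I)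
    {a₁ a₂ b₁ b₂ a₁' a₂' b₁' b₂' : ℝ → ℝ}
    (ha₁ : ∀ s ∈ I, HasDerivAt a₁ (a₁' s) s)
    (ha₂ : ∀ s ∈ I, HasDerivAt a₂ (a₂' s) s)
    (hb₁ : ∀ s ∈ I, HasDerivAt b₁ (b₁' s) s)
    (hb₂ : ∀ s ∈ I, HasDerivAt b₂ (b₂' s) s)
    (hbpos : ∀ s ∈ I, 0 < b₁ s ^ 2 + b₂ s ^ 2)
    (hnorm : ∀ s ∈ I, a₁ s ^ 2 + a₂ s ^ 2 = b₁ s ^ 2 + b₂ s ^ 2)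
    (hwr : ∀ s ∈ I, a₁ s * a₂' s - a₂ s * a₁' s = b₁ s * b₂' s - b₂ s * b₁' s)
    {s₀ : ℝ} (hs₀ : s₀ ∈ I) :
    ∃ x y : ℝ, x ^ 2 + y ^ 2 = 1 ∧
      ∀ s ∈ I, a₁ s = x * b₁ s - y * b₂ s ∧ a₂ s = y * b₁ s + x * b₂ s := by
  -- derivative of the (equal) norms coincide
  have e1 : ∀ s ∈ I, a₁ s * a₁' s + a₂ s * a₂' s = b₁ s * b₁' s + b₂ s * b₂' s := by
    intro s hs
    have hda : HasDerivAt (fun x => a₁ x ^ 2 + a₂ x ^ 2)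
        ((2:ℕ) * a₁ s ^ 1 * a₁' s + (2:ℕ) * a₂ s ^ 1 * a₂' s) s :=
      ((ha₁ s hs).pow 2).add ((ha₂ s hs).pow 2)
    have hdb : HasDerivAt (fun x => b₁ x ^ 2 + b₂ x ^ 2)
        ((2:ℕ) * b₁ s ^ 1 * b₁' s + (2:ℕ) * b₂ s ^ 1 * b₂' s) s :=
      ((hb₁ s hs).pow 2).add ((hb₂ s hs).pow 2)
    have hev : (fun x => a₁ x ^ 2 + a₂ x ^ 2) =ᶠ[nhds s] (fun x => b₁ x ^ 2 + b₂ x ^ 2) :=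
      Filter.eventuallyEq_of_mem (hIo.mem_nhds hs) hnorm
    have := hev.deriv_eq
    rw [hda.deriv, hdb.deriv] at this
    push_cast at this
    nlinarith [this]
  set u₁ : ℝ → ℝ := fun s => (a₁ s * b₁ s + a₂ s * b₂ s) / (b₁ s ^ 2 + b₂ s ^ 2) with hu₁
  set u₂ : ℝ → ℝ := fun s => (a₂ s * b₁ s - a₁ s * b₂ s) / (b₁ s ^ 2 + b₂ s ^ 2) with hu₂
  have hder : ∀ s ∈ I, HasDerivAt u₁ 0 s ∧ HasDerivAt u₂ 0 s := by
    intro s hs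
    have hne : b₁ s ^ 2 + b₂ s ^ 2 ≠ 0 := (hbpos s hs).ne'
    have hdρ : HasDerivAt (fun x => b₁ x ^ 2 + b₂ x ^ 2)
        ((2:ℕ) * b₁ s ^ 1 * b₁' s + (2:ℕ) * b₂ s ^ 1 * b₂' s) s :=
      ((hb₁ s hs).pow 2).add ((hb₂ s hs).pow 2)
    have hdN₁ : HasDerivAt (fun x => a₁ x * b₁ x + a₂ x * b₂ x)
        ((a₁' s * b₁ s + a₁ s * b₁' s) + (a₂' s * b₂ s + a₂ s * b₂' s)) s :=
      ((ha₁ s hs).mul (hb₁ s hs)).add ((ha₂ s hs).mul (hb₂ s hs))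
    have hdN₂ : HasDerivAt (fun x => a₂ x * b₁ x - a₁ x * b₂ x)
        ((a₂' s * b₁ s + a₂ s * b₁' s) - (a₁' s * b₂ s + a₁ s * b₂' s)) s :=
      ((ha₂ s hs).mul (hb₁ s hs)).sub ((ha₁ s hs).mul (hb₂ s hs))
    have h1 := hdN₁.div hdρ hne
    have h2 := hdN₂.div hdρ hne
    have he1 := e1 s hs
    have he2 := hwr s hs
    have he3 := hnorm s hs
    -- abbreviations
    set A1 := a₁ s; set A2 := a₂ s; set B1 := b₁ s; set B2 := b₂ s
    set dA1 := a₁' s; set dA2 := a₂' s; set dB1 := b₁' s; set dB2 := b₂' s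
    have hX : ((dA1 * B1 + A1 * dB1 + (dA2 * B2 + A2 * dB2)) * (B1 ^ 2 + B2 ^ 2)
        - (A1 * B1 + A2 * B2) * ((2:ℕ) * B1 ^ 1 * dB1 + (2:ℕ) * B2 ^ 1 * dB2)) = 0 := by
      have hxy1 : (A1 * B1 + A2 * B2) * ((dA1 * B1 + A1 * dB1 + (dA2 * B2 + A2 * dB2)) * (B1 ^ 2 + B2 ^ 2)
            - (A1 * B1 + A2 * B2) * ((2:ℕ) * B1 ^ 1 * dB1 + (2:ℕ) * B2 ^ 1 * dB2))
          + (A2 * B1 - A1 * B2) * ((dA2 * B1 + A2 * dB1 - (dA1 * B2 + A1 * dB2)) * (B1 ^ 2 + B2 ^ 2)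
            - (A2 * B1 - A1 * B2) * ((2:ℕ) * B1 ^ 1 * dB1 + (2:ℕ) * B2 ^ 1 * dB2)) = 0 := by
        push_cast
        linear_combination ((B1^2+B2^2)^2) * he1 - ((B1^2+B2^2)*(B1*dB1+B2*dB2)) * he3
      have hxy2 : (A1 * B1 + A2 * B2) * ((dA2 * B1 + A2 * dB1 - (dA1 * B2 + A1 * dB2)) * (B1 ^ 2 + B2 ^ 2)
            - (A2 * B1 - A1 * B2) * ((2:ℕ) * B1 ^ 1 * dB1 + (2:ℕ) * B2 ^ 1 * dB2))
          - (A2 * B1 - A1 * B2) * ((dA1 * B1 + A1 * dB1 + (dA2 * B2 + A2 * dB2)) * (B1 ^ 2 + B2 ^ 2)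
            - (A1 * B1 + A2 * B2) * ((2:ℕ) * B1 ^ 1 * dB1 + (2:ℕ) * B2 ^ 1 * dB2)) = 0 := by
        push_cast
        linear_combination ((B1^2+B2^2)^2) * he2 - ((B1^2+B2^2)*(B1*dB2-B2*dB1)) * he3
      have hmul : ((dA1 * B1 + A1 * dB1 + (dA2 * B2 + A2 * dB2)) * (B1 ^ 2 + B2 ^ 2)
          - (A1 * B1 + A2 * B2) * ((2:ℕ) * B1 ^ 1 * dB1 + (2:ℕ) * B2 ^ 1 * dB2)) * (B1 ^ 2 + B2 ^ 2) ^ 2 = 0 := by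
        push_cast at hxy1 hxy2 ⊢
        linear_combination (A1 * B1 + A2 * B2) * hxy1 - (A2 * B1 - A1 * B2) * hxy2
            - (((dA1 * B1 + A1 * dB1 + (dA2 * B2 + A2 * dB2)) * (B1 ^ 2 + B2 ^ 2)
              - (A1 * B1 + A2 * B2) * (2 * B1 * dB1 + 2 * B2 * dB2)) * (B1 ^ 2 + B2 ^ 2)) * he3
      have := mul_eq_zero.mp hmul
      rcases this with h | h
      · exact h
      · exact absurd h (pow_ne_zero 2 hne)
    have hY : ((dA2 * B1 + A2 * dB1 - (dA1 * B2 + A1 * dB2)) * (B1 ^ 2 + B2 ^ 2)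
        - (A2 * B1 - A1 * B2) * ((2:ℕ) * B1 ^ 1 * dB1 + (2:ℕ) * B2 ^ 1 * dB2)) = 0 := by
      have hxy1 : (A1 * B1 + A2 * B2) * ((dA1 * B1 + A1 * dB1 + (dA2 * B2 + A2 * dB2)) * (B1 ^ 2 + B2 ^ 2)
            - (A1 * B1 + A2 * B2) * ((2:ℕ) * B1 ^ 1 * dB1 + (2:ℕ) * B2 ^ 1 * dB2))
          + (A2 * B1 - A1 * B2) * ((dA2 * B1 + A2 * dB1 - (dA1 * B2 + A1 * dB2)) * (B1 ^ 2 + B2 ^ 2)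
            - (A2 * B1 - A1 * B2) * ((2:ℕ) * B1 ^ 1 * dB1 + (2:ℕ) * B2 ^ 1 * dB2)) = 0 := by
        push_cast
        linear_combination ((B1^2+B2^2)^2) * he1 - ((B1^2+B2^2)*(B1*dB1+B2*dB2)) * he3
      have hxy2 : (A1 * B1 + A2 * B2) * ((dA2 * B1 + A2 * dB1 - (dA1 * B2 + A1 * dB2)) * (B1 ^ 2 + B2 ^ 2)
            - (A2 * B1 - A1 * B2) * ((2:ℕ) * B1 ^ 1 * dB1 + (2:ℕ) * B2 ^ 1 * dB2))
          - (A2 * B1 - A1 * B2) * ((dA1 * B1 + A1 * dB1 + (dA2 * B2 + A2 * dB2)) * (B1 ^ 2 + B2 ^ 2)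
            - (A1 * B1 + A2 * B2) * ((2:ℕ) * B1 ^ 1 * dB1 + (2:ℕ) * B2 ^ 1 * dB2)) = 0 := by
        push_cast
        linear_combination ((B1^2+B2^2)^2) * he2 - ((B1^2+B2^2)*(B1*dB2-B2*dB1)) * he3
      have hmul : ((dA2 * B1 + A2 * dB1 - (dA1 * B2 + A1 * dB2)) * (B1 ^ 2 + B2 ^ 2)
          - (A2 * B1 - A1 * B2) * ((2:ℕ) * B1 ^ 1 * dB1 + (2:ℕ) * B2 ^ 1 * dB2)) * (B1 ^ 2 + B2 ^ 2) ^ 2 = 0 := by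
        push_cast at hxy1 hxy2 ⊢
        linear_combination (A2 * B1 - A1 * B2) * hxy1 + (A1 * B1 + A2 * B2) * hxy2
            - (((dA2 * B1 + A2 * dB1 - (dA1 * B2 + A1 * dB2)) * (B1 ^ 2 + B2 ^ 2)
              - (A2 * B1 - A1 * B2) * (2 * B1 * dB1 + 2 * B2 * dB2)) * (B1 ^ 2 + B2 ^ 2)) * he3
      rcases mul_eq_zero.mp hmul with h | h
      · exact h
      · exact absurd h (pow_ne_zero 2 hne)
    constructor
    · have : ((dA1 * B1 + A1 * dB1 + (dA2 * B2 + A2 * dB2)) * (B1 ^ 2 + B2 ^ 2)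
          - (A1 * B1 + A2 * B2) * ((2:ℕ) * B1 ^ 1 * dB1 + (2:ℕ) * B2 ^ 1 * dB2))
          / (B1 ^ 2 + B2 ^ 2) ^ 2 = 0 := by rw [hX, zero_div]
      exact this ▸ h1
    · have : ((dA2 * B1 + A2 * dB1 - (dA1 * B2 + A1 * dB2)) * (B1 ^ 2 + B2 ^ 2)
          - (A2 * B1 - A1 * B2) * ((2:ℕ) * B1 ^ 1 * dB1 + (2:ℕ) * B2 ^ 1 * dB2))
          / (B1 ^ 2 + B2 ^ 2) ^ 2 = 0 := by rw [hY, zero_div]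
      exact this ▸ h2
  -- u₁, u₂ are constant on I
  have hconst : ∀ (u : ℝ → ℝ), (∀ s ∈ I, HasDerivAt u 0 s) → ∀ s ∈ I, u s = u s₀ := by
    intro u hu s hs
    have hdiff : DifferentiableOn ℝ u I := fun z hz => ((hu z hz).differentiableAt).differentiableWithinAt
    have hfd : ∀ z ∈ I, fderivWithin ℝ u I z = 0 := by
      intro z hz
      have h := ((hu z hz).hasFDerivAt.hasFDerivWithinAt).fderivWithin (hIo.uniqueDiffWithinAt hz)
      rw [h]
      ext w
      simp
    exact hconv.is_const_of_fderivWithin_eq_zero hdiff hfd hs hs₀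
  have hc1 := hconst u₁ (fun s hs => (hder s hs).1)
  have hc2 := hconst u₂ (fun s hs => (hder s hs).2)
  refine ⟨u₁ s₀, u₂ s₀, ?_, ?_⟩
  · have hne : b₁ s₀ ^ 2 + b₂ s₀ ^ 2 ≠ 0 := (hbpos s₀ hs₀).ne'
    have he3 := hnorm s₀ hs₀
    rw [hu₁, hu₂]
    field_simp
    linear_combination (b₁ s₀ ^ 2 + b₂ s₀ ^ 2) * he3
  · intro s hs
    have hne : b₁ s ^ 2 + b₂ s ^ 2 ≠ 0 := (hbpos s hs).ne'
    have h1 : a₁ s * b₁ s + a₂ s * b₂ s = u₁ s₀ * (b₁ s ^ 2 + b₂ s ^ 2) := by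
      rw [← hc1 s hs, hu₁]; field_simp
    have h2 : a₂ s * b₁ s - a₁ s * b₂ s = u₂ s₀ * (b₁ s ^ 2 + b₂ s ^ 2) := by
      rw [← hc2 s hs, hu₂]; field_simp
    constructor
    · have : a₁ s * (b₁ s ^ 2 + b₂ s ^ 2) = (u₁ s₀ * b₁ s - u₂ s₀ * b₂ s) * (b₁ s ^ 2 + b₂ s ^ 2) := by
        linear_combination b₁ s * h1 - b₂ s * h2
      exact mul_right_cancel₀ hne this
    · have : a₂ s * (b₁ s ^ 2 + b₂ s ^ 2) = (u₂ s₀ * b₁ s + u₁ s₀ * b₂ s) * (b₁ s ^ 2 + b₂ s ^ 2) := by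
        linear_combination b₂ s * h1 + b₁ s * h2
      exact mul_right_cancel₀ hne this


/-- (Lemma on the ODE of the profile curve.)  If `α₁, α₂` are twice
differentiable, linearly independent solutions of
`s((s²−p)²−q) α'' + (s⁴−p²+q) α' − s³ α = 0` on a nonempty open interval `I` on which
`(s²−p)² − q > 0`, with `p² > q` and `s² + α₁(s)² + α₂(s)² = 1` on `I`, then
`(p−1)² ≤ q < p²`, `I ⊆ J_{p,q}`, and there are `θ ∈ ℝ` and `ε ∈ {−1,1}` so that,
writing `h = h_{p,q}(s)`,
`√2 α₁ = (h + (1−p)/h) cos θ − ε (√(q−(1−p)²)/h) sin θ` and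
`√2 α₂ = (h + (1−p)/h) sin θ + ε (√(q−(1−p)²)/h) cos θ` on `I`. -/
theorem stmt_7 (p q : ℝ) (hpq : q < p ^ 2)
    (I : Set ℝ) (hIo : IsOpen I) (hIc : I.OrdConnected) (hIne : I.Nonempty)
    (hpos : ∀ s ∈ I, 0 < (s ^ 2 - p) ^ 2 - q)
    (α₁ α₂ : ℝ → ℝ)
    (hd1 : ∀ s ∈ I, DifferentiableAt ℝ α₁ s)
    (hd1' : ∀ s ∈ I, DifferentiableAt ℝ (deriv α₁) s)
    (hd2 : ∀ s ∈ I, DifferentiableAt ℝ α₂ s)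
    (hd2' : ∀ s ∈ I, DifferentiableAt ℝ (deriv α₂) s)
    (hode1 : ∀ s ∈ I, s * ((s ^ 2 - p) ^ 2 - q) * deriv (deriv α₁) s
        + (s ^ 4 - p ^ 2 + q) * deriv α₁ s - s ^ 3 * α₁ s = 0)
    (hode2 : ∀ s ∈ I, s * ((s ^ 2 - p) ^ 2 - q) * deriv (deriv α₂) s
        + (s ^ 4 - p ^ 2 + q) * deriv α₂ s - s ^ 3 * α₂ s = 0)
    (hindep : ∀ c₁ c₂ : ℝ, (∀ s ∈ I, c₁ * α₁ s + c₂ * α₂ s = 0) → c₁ = 0 ∧ c₂ = 0)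
    (hunit : ∀ s ∈ I, s ^ 2 + α₁ s ^ 2 + α₂ s ^ 2 = 1) :
    (p - 1) ^ 2 ≤ q ∧
    I ⊆ Set.Ioo (-Real.sqrt (p - Real.sqrt q)) (Real.sqrt (p - Real.sqrt q)) ∧
    ∃ θ ε : ℝ, (ε = 1 ∨ ε = -1) ∧ ∀ s ∈ I,
      (Real.sqrt 2 * α₁ s =
          (Real.sqrt (p - s ^ 2 + Real.sqrt ((p - s ^ 2) ^ 2 - q))
              + (1 - p) / Real.sqrt (p - s ^ 2 + Real.sqrt ((p - s ^ 2) ^ 2 - q)))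
            * Real.cos θ
          - ε * (Real.sqrt (q - (1 - p) ^ 2)
              / Real.sqrt (p - s ^ 2 + Real.sqrt ((p - s ^ 2) ^ 2 - q))) * Real.sin θ) ∧
      (Real.sqrt 2 * α₂ s =
          (Real.sqrt (p - s ^ 2 + Real.sqrt ((p - s ^ 2) ^ 2 - q))
              + (1 - p) / Real.sqrt (p - s ^ 2 + Real.sqrt ((p - s ^ 2) ^ 2 - q)))
            * Real.sin θ
          + ε * (Real.sqrt (q - (1 - p) ^ 2)
              / Real.sqrt (p - s ^ 2 + Real.sqrt ((p - s ^ 2) ^ 2 - q))) * Real.cos θ) := by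
  have hpos' : ∀ s ∈ I, 0 < (p - s ^ 2) ^ 2 - q := by
    intro s hs
    have h := hpos s hs
    nlinarith [h]
  -- E1 : derivative of the unit relation
  have E1 : ∀ s ∈ I, s + α₁ s * deriv α₁ s + α₂ s * deriv α₂ s = 0 := by
    intro s hs
    have hda := ((hasDerivAt_pow 2 s).add ((hd1 s hs).hasDerivAt.pow 2)).add
      ((hd2 s hs).hasDerivAt.pow 2)
    have hev : (fun x => x ^ 2 + α₁ x ^ 2 + α₂ x ^ 2) =ᶠ[nhds s] (fun _ => (1:ℝ)) :=
      Filter.eventuallyEq_of_mem (hIo.mem_nhds hs) hunit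
    have h := hev.deriv_eq
    rw [show (fun x => x ^ 2 + α₁ x ^ 2 + α₂ x ^ 2) = ((fun x => x ^ 2) + α₁ ^ 2 + α₂ ^ 2) from rfl,
      hda.deriv, deriv_const] at h
    norm_num at h
    linarith [h]
  -- E2 : second derivative of the unit relation
  have E2 : ∀ s ∈ I, 1 + (deriv α₁ s ^ 2 + α₁ s * deriv (deriv α₁) s)
      + (deriv α₂ s ^ 2 + α₂ s * deriv (deriv α₂) s) = 0 := by
    intro s hs
    have hda : HasDerivAt (fun x => x + α₁ x * deriv α₁ x + α₂ x * deriv α₂ x)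
        (1 + (deriv α₁ s * deriv α₁ s + α₁ s * deriv (deriv α₁) s)
          + (deriv α₂ s * deriv α₂ s + α₂ s * deriv (deriv α₂) s)) s :=
      ((hasDerivAt_id s).add ((hd1 s hs).hasDerivAt.mul (hd1' s hs).hasDerivAt)).add
        ((hd2 s hs).hasDerivAt.mul (hd2' s hs).hasDerivAt)
    have hev : (fun x => x + α₁ x * deriv α₁ x + α₂ x * deriv α₂ x) =ᶠ[nhds s] (fun _ => (0:ℝ)) :=
      Filter.eventuallyEq_of_mem (hIo.mem_nhds hs) E1
    have h := hev.deriv_eq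
    rw [hda.deriv, deriv_const] at h
    nlinarith [h]
  -- the key Wronskian identity
  have hW2 : ∀ s ∈ I, (α₁ s * deriv α₂ s - α₂ s * deriv α₁ s) ^ 2 * ((p - s ^ 2) ^ 2 - q)
      = (q - (1 - p) ^ 2) * s ^ 2 := by
    intro s hs
    rcases eq_or_ne s 0 with rfl | hs0
    · have hne : q - p ^ 2 ≠ 0 := sub_ne_zero.mpr (ne_of_lt hpq)
      have d1 : deriv α₁ 0 = 0 := by
        have h : (q - p ^ 2) * deriv α₁ 0 = 0 := by linear_combination hode1 0 hs
        rcases mul_eq_zero.mp h with h' | h'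
        · exact absurd h' hne
        · exact h'
      have d2 : deriv α₂ 0 = 0 := by
        have h : (q - p ^ 2) * deriv α₂ 0 = 0 := by linear_combination hode2 0 hs
        rcases mul_eq_zero.mp h with h' | h'
        · exact absurd h' hne
        · exact h'
      rw [d1, d2]; ring
    · have e1 := E1 s hs
      have e2 := E2 s hs
      have o1 := hode1 s hs
      have o2 := hode2 s hs
      have hu := hunit s hs
      -- energy identity
      have hK : (((s ^ 2 - p) ^ 2 - q) * (deriv α₁ s ^ 2 + deriv α₂ s ^ 2)
          - s ^ 2 * (2 * p - 1 - s ^ 2)) = 0 := by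
        have hs3 : s * (((s ^ 2 - p) ^ 2 - q) * (deriv α₁ s ^ 2 + deriv α₂ s ^ 2)
            - s ^ 2 * (2 * p - 1 - s ^ 2)) = 0 := by
          linear_combination (s * ((s ^ 2 - p) ^ 2 - q)) * e2 - (α₁ s) * o1 - (α₂ s) * o2
            - (s ^ 3) * hu + (s ^ 4 - p ^ 2 + q) * e1
        rcases mul_eq_zero.mp hs3 with h | h
        · exact absurd h hs0
        · exact h
      have hLag : (α₁ s * deriv α₂ s - α₂ s * deriv α₁ s) ^ 2
          = (deriv α₁ s ^ 2 + deriv α₂ s ^ 2) * (1 - s ^ 2) - s ^ 2 := by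
        linear_combination (deriv α₁ s ^ 2 + deriv α₂ s ^ 2) * hu
          + (s - (α₁ s * deriv α₁ s + α₂ s * deriv α₂ s)) * e1
      linear_combination ((p - s^2)^2 - q) * hLag + (1 - s ^ 2) * hK
  -- there is a nonzero point in I
  have hs0ex : ∃ s ∈ I, s ≠ 0 := by
    obtain ⟨x, hx⟩ := hIne
    rcases eq_or_ne x 0 with rfl | hne
    · obtain ⟨δ, hδ, hball⟩ := Metric.isOpen_iff.mp hIo 0 hx
      refine ⟨δ/2, hball ?_, (by linarith : (0:ℝ) < δ/2).ne'⟩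
      rw [Metric.mem_ball, Real.dist_eq]
      rw [abs_of_pos (by linarith : (0:ℝ) < δ/2 - 0)]
      linarith
    · exact ⟨x, hx, hne⟩
  have hcnn : 0 ≤ q - (1-p)^2 := by
    obtain ⟨s₁, hs₁, hs₁0⟩ := hs0ex
    have h := hW2 s₁ hs₁
    have hD := hpos' s₁ hs₁
    have hs2 : 0 < s₁^2 := by positivity
    nlinarith [sq_nonneg (α₁ s₁ * deriv α₂ s₁ - α₂ s₁ * deriv α₁ s₁)]
  have hq0 : 0 ≤ q := by nlinarith [sq_nonneg (1-p)]
  have concl1 : (p-1)^2 ≤ q := by nlinarith [hcnn]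
  -- I is contained in J
  have hsqq : Real.sqrt q ^ 2 = q := Real.sq_sqrt hq0
  have hple : 1 ≤ p + Real.sqrt q := by
    have h1 : |p - 1| ≤ Real.sqrt q := by
      rw [← Real.sqrt_sq_eq_abs]
      exact Real.sqrt_le_sqrt concl1
    have h2 := neg_abs_le (p-1)
    linarith
  have hIs2 : ∀ s ∈ I, s^2 < p - Real.sqrt q := by
    intro s hs
    have hs1 : s^2 ≤ 1 := by nlinarith [hunit s hs, sq_nonneg (α₁ s), sq_nonneg (α₂ s)]
    have habs : Real.sqrt q < |s^2 - p| := by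
      rw [← Real.sqrt_sq_eq_abs]
      exact Real.sqrt_lt_sqrt hq0 (by nlinarith [hpos s hs])
    rcases abs_cases (s^2 - p) with ⟨he, _⟩ | ⟨he, _⟩
    · rw [he] at habs; nlinarith
    · rw [he] at habs; linarith
  have concl2 : I ⊆ Set.Ioo (-Real.sqrt (p - Real.sqrt q)) (Real.sqrt (p - Real.sqrt q)) := by
    intro s hs
    have h1 : Real.sqrt (s^2) < Real.sqrt (p - Real.sqrt q) :=
      Real.sqrt_lt_sqrt (sq_nonneg s) (hIs2 s hs)
    rw [Real.sqrt_sq_eq_abs] at h1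
    obtain ⟨hl, hr⟩ := abs_lt.mp h1
    exact ⟨hl, hr⟩
  have htgt : ∀ s ∈ I, Real.sqrt q < p - s^2 := by
    intro s hs; have := hIs2 s hs; linarith
  have htpos : ∀ s ∈ I, 0 < p - s^2 := by
    intro s hs; have := htgt s hs; have := Real.sqrt_nonneg q; linarith
  -- the function V = W * sqrt(D)
  set V : ℝ → ℝ := fun s => (α₁ s * deriv α₂ s - α₂ s * deriv α₁ s) * Real.sqrt ((p - s^2)^2 - q)
    with hVdef
  have hVsq : ∀ s ∈ I, V s ^ 2 = (q - (1-p)^2) * s^2 := by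
    intro s hs
    have hD : Real.sqrt ((p - s^2)^2 - q) ^ 2 = (p - s^2)^2 - q := Real.sq_sqrt (hpos' s hs).le
    rw [hVdef]
    simp only
    rw [mul_pow, hD]
    exact hW2 s hs
  have hcs : Real.sqrt (q - (1-p)^2) ^ 2 = q - (1-p)^2 := Real.sq_sqrt hcnn
  have hdich : ∀ s ∈ I, V s = Real.sqrt (q-(1-p)^2) * s ∨ V s = -(Real.sqrt (q-(1-p)^2) * s) := by
    intro s hs
    have h : (V s - Real.sqrt (q-(1-p)^2) * s) * (V s + Real.sqrt (q-(1-p)^2) * s) = 0 := by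
      linear_combination hVsq s hs - s^2 * hcs
    rcases mul_eq_zero.mp h with h | h
    · left; linarith
    · right; linarith
  have hVcont : ContinuousOn V I := by
    apply ContinuousOn.mul
    · intro s hs
      exact (((hd1 s hs).mul (hd2' s hs)).sub
        ((hd2 s hs).mul (hd1' s hs))).continuousAt.continuousWithinAt
    · apply Continuous.continuousOn
      exact Real.continuous_sqrt.comp (((continuous_const.sub (continuous_pow 2)).pow 2).sub continuous_const)
  have key2 : 0 < q - (1-p)^2 → ∀ J : Set ℝ, J ⊆ I → J.OrdConnected → (∀ z ∈ J, z ≠ 0) →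
      ∀ s₀ ∈ J, ∀ s ∈ J, 0 < V s₀ → 0 < V s := by
    intro hcpos J hJI hJoc hJ0 s₀ hs₀ s hs hV₀
    by_contra hle
    push_neg at hle
    have hJpre : IsPreconnected J := isPreconnected_iff_ordConnected.mpr hJoc
    have h0m : (0:ℝ) ∈ Icc (V s) (V s₀) := ⟨hle, hV₀.le⟩
    obtain ⟨z, hzJ, hzeq⟩ := hJpre.intermediate_value hs hs₀ (hVcont.mono hJI) h0m
    have h2 := hVsq z (hJI hzJ)
    rw [hzeq] at h2
    have hz0 := hJ0 z hzJ
    have hz2 : (0:ℝ) < z^2 := by rcases hz0.lt_or_gt with h|h <;> nlinarith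
    nlinarith
  have hsame : ∀ J : Set ℝ, J.OrdConnected → (∀ z ∈ J, z ≠ 0) →
      ∀ s₁ ∈ J, ∀ s ∈ J, 0 < s₁ * s := by
    intro J hJoc hJ0 s₁ hs₁ s hs
    rcases (hJ0 s₁ hs₁).lt_or_gt with h1|h1 <;> rcases (hJ0 s hs).lt_or_gt with h2|h2
    · exact mul_pos_of_neg_of_neg h1 h2
    · have h0 : (0:ℝ) ∈ J := hJoc.out hs₁ hs ⟨h1.le, h2.le⟩
      exact absurd rfl (hJ0 0 h0)
    · have h0 : (0:ℝ) ∈ J := hJoc.out hs hs₁ ⟨h2.le, h1.le⟩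
      exact absurd rfl (hJ0 0 h0)
    · exact mul_pos h1 h2
  have hbranch : 0 < q - (1-p)^2 → ∀ J : Set ℝ, J ⊆ I → J.OrdConnected → (∀ z ∈ J, z ≠ 0) →
      ∀ s₁ ∈ J, ∀ s ∈ J,
      ((V s₁ = Real.sqrt (q-(1-p)^2) * s₁ → V s = Real.sqrt (q-(1-p)^2) * s) ∧
       (V s₁ = -(Real.sqrt (q-(1-p)^2) * s₁) → V s = -(Real.sqrt (q-(1-p)^2) * s))) := by
    intro hcpos J hJI hJoc hJ0 s₁ hs₁ s hs
    have hsqc : 0 < Real.sqrt (q-(1-p)^2) := Real.sqrt_pos.mpr hcpos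
    have hplus : ∀ z₁ ∈ J, ∀ z ∈ J, V z₁ = Real.sqrt (q-(1-p)^2) * z₁ →
        V z = Real.sqrt (q-(1-p)^2) * z := by
      intro z₁ hz₁ z hz hf
      rcases hdich z (hJI hz) with h|h
      · exact h
      · exfalso
        have hzz := hsame J hJoc hJ0 z₁ hz₁ z hz
        rcases (hJ0 z₁ hz₁).lt_or_gt with hneg|hpos₁
        · -- z₁ < 0, hence z < 0, V z = -(√c z) > 0
          have hzneg : z < 0 := by nlinarith
          have hVz : 0 < V z := by rw [h]; nlinarith
          have := key2 hcpos J hJI hJoc hJ0 z hz z₁ hz₁ hVz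
          rw [hf] at this
          nlinarith
        · have hzpos : 0 < z := by nlinarith
          have hVz₁ : 0 < V z₁ := by rw [hf]; nlinarith
          have := key2 hcpos J hJI hJoc hJ0 z₁ hz₁ z hz hVz₁
          rw [h] at this
          nlinarith
    constructor
    · exact hplus s₁ hs₁ s hs
    · intro hf
      rcases hdich s (hJI hs) with h|h
      · exfalso
        have hq2 := hplus s hs s₁ hs₁ h
        rw [hf] at hq2
        have h2 : Real.sqrt (q-(1-p)^2) * s₁ = 0 := by linarith
        rcases mul_eq_zero.mp h2 with h3 | h3
        · exact hsqc.ne' h3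
        · exact (hJ0 s₁ hs₁) h3
      · exact h
  have hsign : ∃ ε : ℝ, (ε = 1 ∨ ε = -1) ∧
      ∀ s ∈ I, V s = ε * (Real.sqrt (q-(1-p)^2) * s) := by
    rcases eq_or_lt_of_le hcnn with heq | hcpos
    · refine ⟨1, Or.inl rfl, ?_⟩
      intro s hs
      have h := hVsq s hs
      rw [← heq] at h
      have hv0 : V s = 0 := by
        have h2 : V s ^ 2 = 0 := by linarith [h]
        exact pow_eq_zero_iff two_ne_zero |>.mp h2
      rw [hv0, ← heq]
      simp
    · by_cases h0I : (0:ℝ) ∈ I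
      · -- bridge through 0
        obtain ⟨δ, hδ, hball⟩ := Metric.isOpen_iff.mp hIo 0 h0I
        have hspI : δ/2 ∈ I := by
          apply hball
          rw [Metric.mem_ball, Real.dist_eq, abs_of_pos (by linarith : (0:ℝ) < δ/2 - 0)]
          linarith
        have hsnI : -(δ/2) ∈ I := by
          apply hball
          rw [Metric.mem_ball, Real.dist_eq, abs_of_neg (by linarith : -(δ/2) - 0 < 0)]
          linarith
        have hocp : (I ∩ Ioi 0).OrdConnected := hIc.inter Set.ordConnected_Ioi
        have hocn : (I ∩ Iio 0).OrdConnected := hIc.inter Set.ordConnected_Iio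
        have hz0p : ∀ z ∈ I ∩ Ioi 0, z ≠ 0 := fun z hz => ne_of_gt hz.2
        have hz0n : ∀ z ∈ I ∩ Iio 0, z ≠ 0 := fun z hz => ne_of_lt hz.2
        have hspm : δ/2 ∈ I ∩ Ioi 0 := ⟨hspI, by simp; linarith⟩
        have hsnm : -(δ/2) ∈ I ∩ Iio 0 := ⟨hsnI, by simp; linarith⟩
        have hplus : ∃ e : ℝ, (e = 1 ∨ e = -1) ∧ ∀ s ∈ I, 0 < s →
            V s = e * (Real.sqrt (q-(1-p)^2) * s) := by
          rcases hdich (δ/2) hspI with h|h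
          · refine ⟨1, Or.inl rfl, fun s hs hs0 => ?_⟩
            have := (hbranch hcpos (I ∩ Ioi 0) inter_subset_left hocp hz0p (δ/2) hspm
              s ⟨hs, hs0⟩).1 h
            rw [this]; ring
          · refine ⟨-1, Or.inr rfl, fun s hs hs0 => ?_⟩
            have := (hbranch hcpos (I ∩ Ioi 0) inter_subset_left hocp hz0p (δ/2) hspm
              s ⟨hs, hs0⟩).2 h
            rw [this]; ring
        have hminus : ∃ e : ℝ, (e = 1 ∨ e = -1) ∧ ∀ s ∈ I, s < 0 →
            V s = e * (Real.sqrt (q-(1-p)^2) * s) := by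
          rcases hdich (-(δ/2)) hsnI with h|h
          · refine ⟨1, Or.inl rfl, fun s hs hs0 => ?_⟩
            have := (hbranch hcpos (I ∩ Iio 0) inter_subset_left hocn hz0n (-(δ/2)) hsnm
              s ⟨hs, hs0⟩).1 h
            rw [this]; ring
          · refine ⟨-1, Or.inr rfl, fun s hs hs0 => ?_⟩
            have := (hbranch hcpos (I ∩ Iio 0) inter_subset_left hocn hz0n (-(δ/2)) hsnm
              s ⟨hs, hs0⟩).2 h
            rw [this]; ring
        obtain ⟨e₁, he₁, hP⟩ := hplus
        obtain ⟨e₂, he₂, hM⟩ := hminus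
        have hV00 : V 0 = 0 := by
          have h := hVsq 0 h0I
          have h2 : V 0 ^ 2 = 0 := by rw [h]; ring
          exact pow_eq_zero_iff two_ne_zero |>.mp h2
        have hVdiff : DifferentiableAt ℝ V 0 := by
          have h1 : DifferentiableAt ℝ (fun s => α₁ s * deriv α₂ s - α₂ s * deriv α₁ s) 0 :=
            ((hd1 0 h0I).mul (hd2' 0 h0I)).sub ((hd2 0 h0I).mul (hd1' 0 h0I))
          have hin := (((hasDerivAt_pow 2 (0:ℝ)).const_sub p).pow 2).sub_const q
          have h2 : DifferentiableAt ℝ (fun s : ℝ => Real.sqrt ((p - s^2)^2 - q)) 0 :=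
            ((Real.hasDerivAt_sqrt (hpos' 0 h0I).ne').comp 0 hin).differentiableAt
          exact h1.mul h2
        have hslope := hVdiff.hasDerivAt
        rw [hasDerivAt_iff_tendsto_slope] at hslope
        have hr : Tendsto (slope V 0) (𝓝[>] (0:ℝ)) (𝓝 (deriv V 0)) :=
          hslope.mono_left (nhdsWithin_mono _ (fun x hx => ne_of_gt hx))
        have hl : Tendsto (slope V 0) (𝓝[<] (0:ℝ)) (𝓝 (deriv V 0)) :=
          hslope.mono_left (nhdsWithin_mono _ (fun x hx => ne_of_lt hx))
        have heqr : slope V 0 =ᶠ[𝓝[>] (0:ℝ)] fun _ => e₁ * Real.sqrt (q-(1-p)^2) := by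
          filter_upwards [mem_nhdsWithin_of_mem_nhds (hIo.mem_nhds h0I),
            self_mem_nhdsWithin] with z hzI hz0
          have hz : V z = e₁ * (Real.sqrt (q-(1-p)^2) * z) := hP z hzI hz0
          have hzne : z ≠ 0 := ne_of_gt (Set.mem_Ioi.mp hz0)
          rw [slope_def_field, hV00, hz]
          field_simp
          ring
        have heql : slope V 0 =ᶠ[𝓝[<] (0:ℝ)] fun _ => e₂ * Real.sqrt (q-(1-p)^2) := by
          filter_upwards [mem_nhdsWithin_of_mem_nhds (hIo.mem_nhds h0I),
            self_mem_nhdsWithin] with z hzI hz0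
          have hz : V z = e₂ * (Real.sqrt (q-(1-p)^2) * z) := hM z hzI hz0
          have hzne : z ≠ 0 := ne_of_lt (Set.mem_Iio.mp hz0)
          rw [slope_def_field, hV00, hz]
          field_simp
          ring
        have h1 : deriv V 0 = e₁ * Real.sqrt (q-(1-p)^2) :=
          tendsto_nhds_unique hr ((tendsto_congr' heqr).mpr tendsto_const_nhds)
        have h2 : deriv V 0 = e₂ * Real.sqrt (q-(1-p)^2) :=
          tendsto_nhds_unique hl ((tendsto_congr' heql).mpr tendsto_const_nhds)
        have he12 : e₁ = e₂ :=
          mul_right_cancel₀ (Real.sqrt_pos.mpr hcpos).ne' (h1.symm.trans h2)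
        refine ⟨e₁, he₁, fun s hs => ?_⟩
        rcases lt_trichotomy s 0 with h|h|h
        · rw [he12]; exact hM s hs h
        · subst h; rw [hV00]; ring
        · exact hP s hs h
      · -- 0 not in I
        obtain ⟨s₁, hs₁⟩ := hIne
        have hz0 : ∀ z ∈ I, z ≠ 0 := fun z hz h => h0I (h ▸ hz)
        rcases hdich s₁ hs₁ with h|h
        · refine ⟨1, Or.inl rfl, fun s hs => ?_⟩
          have := (hbranch hcpos I subset_rfl hIc hz0 s₁ hs₁ s hs).1 h
          rw [this]; ring
        · refine ⟨-1, Or.inr rfl, fun s hs => ?_⟩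
          have := (hbranch hcpos I subset_rfl hIc hz0 s₁ hs₁ s hs).2 h
          rw [this]; ring
  obtain ⟨ε, hε, hVsign⟩ := hsign
  have hε2 : ε^2 = 1 := by rcases hε with h|h <;> rw [h] <;> norm_num
  -- properties of H
  have hsDpos : ∀ s ∈ I, 0 < Real.sqrt ((p - s^2)^2 - q) :=
    fun s hs => Real.sqrt_pos.mpr (hpos' s hs)
  have hsD2 : ∀ s ∈ I, Real.sqrt ((p - s^2)^2 - q) ^ 2 = (p - s^2)^2 - q :=
    fun s hs => Real.sq_sqrt (hpos' s hs).le
  have hHin_pos : ∀ s ∈ I, 0 < p - s^2 + Real.sqrt ((p - s^2)^2 - q) :=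
    fun s hs => by linarith [Real.sqrt_nonneg ((p - s^2)^2 - q), htpos s hs]
  set H : ℝ → ℝ := fun s => Real.sqrt (p - s^2 + Real.sqrt ((p - s^2)^2 - q)) with hHdef
  have hHpos : ∀ s ∈ I, 0 < H s := fun s hs => Real.sqrt_pos.mpr (hHin_pos s hs)
  have hH2 : ∀ s ∈ I, H s ^ 2 = p - s^2 + Real.sqrt ((p - s^2)^2 - q) :=
    fun s hs => Real.sq_sqrt (hHin_pos s hs).le
  have hqH : ∀ s ∈ I, H s ^ 2 * ((p - s^2) - Real.sqrt ((p - s^2)^2 - q)) = q := by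
    intro s hs
    rw [hH2 s hs]
    linear_combination - hsD2 s hs
  have hHder : ∀ s ∈ I, HasDerivAt H (-(s * H s) / Real.sqrt ((p - s^2)^2 - q)) s := by
    intro s hs
    have h0 : HasDerivAt (fun x : ℝ => p - x^2) (-(2*s)) s := by
      simpa using (hasDerivAt_pow 2 s).const_sub p
    have h1 : HasDerivAt (fun x : ℝ => (p - x^2)^2 - q) (2 * (p - s^2) * (-(2*s))) s := by
      simpa using (h0.pow 2).sub_const q
    have h2 : HasDerivAt (fun x : ℝ => Real.sqrt ((p - x^2)^2 - q))
        (1 / (2 * Real.sqrt ((p - s^2)^2 - q)) * (2 * (p - s^2) * (-(2*s)))) s :=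
      (Real.hasDerivAt_sqrt (hpos' s hs).ne').comp s h1
    have h3 := h0.add h2
    have h4 := (Real.hasDerivAt_sqrt (hHin_pos s hs).ne').comp s h3
    refine h4.congr_deriv (Eq.symm ?_)
    rw [show Real.sqrt (p - s^2 + Real.sqrt ((p - s^2)^2 - q)) = H s from rfl]
    have hHne := (hHpos s hs).ne'
    have hDne := (hsDpos s hs).ne'
    field_simp
    linear_combination (-s) * hH2 s hs
  -- the comparison curve
  set b₁ : ℝ → ℝ := fun x => (H x + (1-p)/H x)/Real.sqrt 2 with hb₁def
  set b₂ : ℝ → ℝ := fun x => ε * (Real.sqrt (q-(1-p)^2)/H x)/Real.sqrt 2 with hb₂def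
  have hs2pos : (0:ℝ) < Real.sqrt 2 := Real.sqrt_pos.mpr (by norm_num)
  have hs22 : Real.sqrt 2 ^ 2 = 2 := Real.sq_sqrt (by norm_num)
  have hb₁der : ∀ s ∈ I, HasDerivAt b₁
      ((-(s * H s) / Real.sqrt ((p - s^2)^2 - q)) * (1 - (1-p)/(H s)^2) / Real.sqrt 2) s := by
    intro s hs
    have h1 := ((hHder s hs).add
      ((hasDerivAt_const s (1-p)).div (hHder s hs) (hHpos s hs).ne')).div_const (Real.sqrt 2)
    refine h1.congr_deriv (Eq.symm ?_)
    have hHne := (hHpos s hs).ne'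
    have hDne := (hsDpos s hs).ne'
    field_simp
    ring
  have hb₂der : ∀ s ∈ I, HasDerivAt b₂
      (ε * (Real.sqrt (q-(1-p)^2) * s / (Real.sqrt ((p - s^2)^2 - q) * H s)) / Real.sqrt 2) s := by
    intro s hs
    have h1 := (((hasDerivAt_const s (Real.sqrt (q-(1-p)^2))).div (hHder s hs)
      (hHpos s hs).ne').const_mul ε).div_const (Real.sqrt 2)
    refine h1.congr_deriv (Eq.symm ?_)
    have hHne := (hHpos s hs).ne'
    have hDne := (hsDpos s hs).ne'
    field_simp
    ring
  have hbnorm : ∀ s ∈ I, b₁ s^2 + b₂ s^2 = 1 - s^2 := by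
    intro s hs
    rw [hb₁def, hb₂def]
    simp only
    have hHne := (hHpos s hs).ne'
    have key : (H s^2 + (1-p))^2 + (q - (1-p)^2) = 2*(1-s^2)*H s^2 := by
      rw [hH2 s hs]
      linear_combination hsD2 s hs
    field_simp
    linear_combination key + ε^2 * hcs + (q-(1-p)^2) * hε2 - ((1-s^2)*H s^2) * hs22
  have hbpos : ∀ s ∈ I, 0 < b₁ s^2 + b₂ s^2 := by
    intro s hs
    rw [hbnorm s hs]
    have := hIs2 s hs
    have h2 : p - Real.sqrt q ≤ 1 := by
      have h1 : |p - 1| ≤ Real.sqrt q := by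
        rw [← Real.sqrt_sq_eq_abs]
        exact Real.sqrt_le_sqrt concl1
      have := le_abs_self (p-1)
      linarith
    nlinarith
  have hnorm : ∀ s ∈ I, α₁ s^2 + α₂ s^2 = b₁ s^2 + b₂ s^2 := by
    intro s hs
    rw [hbnorm s hs]
    have := hunit s hs
    linarith
  have hwr : ∀ s ∈ I, α₁ s * deriv α₂ s - α₂ s * deriv α₁ s =
      b₁ s * (ε * (Real.sqrt (q-(1-p)^2) * s / (Real.sqrt ((p - s^2)^2 - q) * H s)) / Real.sqrt 2)
      - b₂ s * ((-(s * H s) / Real.sqrt ((p - s^2)^2 - q)) * (1 - (1-p)/(H s)^2) / Real.sqrt 2) := by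
    intro s hs
    have hV := hVsign s hs
    rw [hVdef] at hV
    simp only at hV
    apply mul_right_cancel₀ (hsDpos s hs).ne'
    rw [hV]
    rw [hb₁def, hb₂def]
    simp only
    exact wr_alg (H s) (Real.sqrt ((p - s^2)^2 - q)) (Real.sqrt 2) ε
      (Real.sqrt (q-(1-p)^2)) s (1-p) (hHpos s hs).ne' (hsDpos s hs).ne' hs2pos.ne' hs22
  have hconv : Convex ℝ I := hIc.convex
  obtain ⟨s₀, hs₀⟩ := hIne
  obtain ⟨x, y, hxy, hform⟩ := rot_aux hIo hconv
    (fun s hs => (hd1 s hs).hasDerivAt) (fun s hs => (hd2 s hs).hasDerivAt)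
    hb₁der hb₂der hbpos hnorm hwr hs₀
  -- the angle
  set z : ℂ := ⟨x, y⟩ with hzdef
  have habs : ‖z‖ = 1 := by
    have h1 : ‖z‖ ^ 2 = 1 := by
      rw [Complex.sq_norm, Complex.normSq_mk]
      nlinarith [hxy]
    nlinarith [norm_nonneg z]
  have hz0 : z ≠ 0 := by
    intro h
    rw [h] at habs
    simp at habs
  have hcos : Real.cos (Complex.arg z) = x := by
    rw [Complex.cos_arg hz0, habs]
    simp [hzdef]
  have hsin : Real.sin (Complex.arg z) = y := by
    rw [Complex.sin_arg, habs]
    simp [hzdef]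
  refine ⟨concl1, concl2, Complex.arg z, ε, hε, ?_⟩
  intro s hs
  obtain ⟨hf1, hf2⟩ := hform s hs
  have hb1v : Real.sqrt 2 * b₁ s = H s + (1-p)/H s := by
    rw [hb₁def]; field_simp
  have hb2v : Real.sqrt 2 * b₂ s = ε * (Real.sqrt (q-(1-p)^2)/H s) := by
    rw [hb₂def, mul_comm, div_mul_cancel₀ _ hs2pos.ne']
  constructor
  · show Real.sqrt 2 * α₁ s = (H s + (1 - p) / H s) * Real.cos (Complex.arg z)
      - ε * (Real.sqrt (q - (1 - p) ^ 2) / H s) * Real.sin (Complex.arg z)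
    rw [hcos, hsin]
    linear_combination (Real.sqrt 2) * hf1 + x * hb1v - y * hb2v
  · show Real.sqrt 2 * α₂ s = (H s + (1 - p) / H s) * Real.sin (Complex.arg z)
      + ε * (Real.sqrt (q - (1 - p) ^ 2) / H s) * Real.cos (Complex.arg z)
    rw [hcos, hsin]
    linear_combination (Real.sqrt 2) * hf2 + y * hb1v + x * hb2v
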